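/- arXiv:math-ph/0402031 — 6 statements merged into one kernel-verified Lean document; each statement's English description precedes it below -/
import Mathlib

section
/- Let π₁, π₋₁ be N×N complex matrices and S an invertible N×N complex matrix. For c ∈ ℂ, c ≠ 0, set u(c) = I + (c−1)π₁ + (c⁻¹−1)π₋₁. Then u(c)·S·u(c)ᵀ·S⁻¹ = I holds for every nonzero c ∈ ℂ if and only if the four algebraic equations hold: (E1) π₁Sπ₁ᵀS⁻¹ = 0; (E2) π₋₁Sπ₋₁ᵀS⁻¹ = 0; (E3) π₁ + Sπ₁ᵀS⁻¹ − π₁Sπ₋₁ᵀS⁻¹ − π₋₁Sπ₁ᵀS⁻¹ = 0; (E4) π₋₁ + Sπ₋₁ᵀS⁻¹ − π₁Sπ₋₁ᵀS⁻¹ − π₋₁Sπ₁ᵀS⁻¹ = 0. -/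
open Matrix

/-- the dressing factor `u(c) = 1 + (c-1)•π₁ + (c⁻¹-1)•π₋₁` satisfies
`u(c) * S * u(c)ᵀ * S⁻¹ = 1` for every nonzero `c` iff the four algebraic equations
(E1)–(E4) hold. -/
theorem dressing_factor_group_condition_iff {N : ℕ}
    (π₁ πm S : Matrix (Fin N) (Fin N) ℂ) (hS : IsUnit S.det) :
    (∀ c : ℂ, c ≠ 0 →
      ((1 : Matrix (Fin N) (Fin N) ℂ) + (c - 1) • π₁ + (c⁻¹ - 1) • πm) * S *
        ((1 : Matrix (Fin N) (Fin N) ℂ) + (c - 1) • π₁ + (c⁻¹ - 1) • πm)ᵀ * S⁻¹ = 1) ↔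
    (π₁ * S * π₁ᵀ * S⁻¹ = 0 ∧
     πm * S * πmᵀ * S⁻¹ = 0 ∧
     π₁ + S * π₁ᵀ * S⁻¹ - π₁ * S * πmᵀ * S⁻¹ - πm * S * π₁ᵀ * S⁻¹ = 0 ∧
     πm + S * πmᵀ * S⁻¹ - π₁ * S * πmᵀ * S⁻¹ - πm * S * π₁ᵀ * S⁻¹ = 0) := by
  set A := π₁ * S * π₁ᵀ * S⁻¹ with hA
  set B := πm * S * πmᵀ * S⁻¹ with hB
  set X := π₁ + S * π₁ᵀ * S⁻¹ - π₁ * S * πmᵀ * S⁻¹ - πm * S * π₁ᵀ * S⁻¹ with hX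
  set Y := πm + S * πmᵀ * S⁻¹ - π₁ * S * πmᵀ * S⁻¹ - πm * S * π₁ᵀ * S⁻¹ with hY
  have hSS : S * S⁻¹ = 1 := mul_nonsing_inv S hS
  have key : ∀ c : ℂ, c ≠ 0 →
      ((1 : Matrix (Fin N) (Fin N) ℂ) + (c - 1) • π₁ + (c⁻¹ - 1) • πm) * S *
        ((1 : Matrix (Fin N) (Fin N) ℂ) + (c - 1) • π₁ + (c⁻¹ - 1) • πm)ᵀ * S⁻¹ =
      1 + (c - 1) ^ 2 • A + (c⁻¹ - 1) ^ 2 • B + (c - 1) • X + (c⁻¹ - 1) • Y := by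
    intro c hc
    have hc' : c * c⁻¹ = 1 := mul_inv_cancel₀ hc
    rw [hA, hB, hX, hY]
    have hcan : ∀ B : Matrix (Fin N) (Fin N) ℂ, B * S * S⁻¹ = B := fun B =>
      Matrix.mul_nonsing_inv_cancel_right S B hS
    simp only [hcan, transpose_add, transpose_smul, transpose_one, Matrix.add_mul,
      Matrix.mul_add, Matrix.smul_mul, Matrix.mul_smul, Matrix.one_mul, Matrix.mul_one,
      smul_smul, hSS, smul_add, smul_sub]
    match_scalars <;> field_simp <;> ring
  constructor
  · intro H
    have h1 := key 2 (by norm_num); rw [H 2 (by norm_num)] at h1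
    have h2 := key (1/2) (by norm_num); rw [H (1/2) (by norm_num)] at h2
    have h3 := key (-1) (by norm_num); rw [H (-1) (by norm_num)] at h3
    have h4 := key 3 (by norm_num); rw [H 3 (by norm_num)] at h4
    refine ⟨?_, ?_, ?_, ?_⟩
    · linear_combination (norm := module) (8/9 : ℂ) • h1 + (4/45 : ℂ) • h2 +
        (-1/36 : ℂ) • h3 + (-9/20 : ℂ) • h4
    · linear_combination (norm := module) (-4/3 : ℂ) • h1 + (-8/15 : ℂ) • h2 +
        (-1/12 : ℂ) • h3 + (9/20 : ℂ) • h4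
    · linear_combination (norm := module) (-4/3 : ℂ) • h1 + (-4/15 : ℂ) • h2 +
        (1/8 : ℂ) • h3 + (9/40 : ℂ) • h4
    · linear_combination (norm := module) (4/9 : ℂ) • h1 + (-28/45 : ℂ) • h2 +
        (11/72 : ℂ) • h3 + (-9/40 : ℂ) • h4
  · rintro ⟨h1, h2, h3, h4⟩ c hc
    rw [key c hc, ← hA] at *
    rw [h1, h2, h3, h4]
    simp
end

section
/- Let σ ∈ {+1, −1} and let S be an invertible N×N complex matrix with Sᵀ = σS and S⁻¹ = σS. Let n, m be N×r₁ complex matrices with nᵀSn = 0 and mᵀSm = 0, and let A, B be r₁×r₁ complex matrices with Aᵀ = −σA and Bᵀ = −σB. Assume ρ := mᵀn is invertible and R := ρ − σA(ρᵀ)⁻¹B is invertible. Define Y = (n + Sm(ρᵀ)⁻¹B)R⁻¹, X = (m + Snρ⁻¹A)(Rᵀ)⁻¹, π₁ = Ymᵀ and π₋₁ = SXnᵀS⁻¹. Then the four algebraic equations hold: (E1) π₁Sπ₁ᵀS⁻¹ = 0; (E2) π₋₁Sπ₋₁ᵀS⁻¹ = 0; (E3) π₁ + Sπ₁ᵀS⁻¹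 − π₁Sπ₋₁ᵀS⁻¹ − π₋₁Sπ₁ᵀS⁻¹ = 0; (E4) π₋₁ + Sπ₋₁ᵀS⁻¹ − π₁Sπ₋₁ᵀS⁻¹ − π₋₁Sπ₁ᵀS⁻¹ = 0. -/
open Matrix

private lemma ZM_mul_inv_cancel_left {r k : ℕ} {M : Matrix (Fin r) (Fin r) ℂ} (h : IsUnit M.det)
    (x : Matrix (Fin r) (Fin k) ℂ) : M * (M⁻¹ * x) = x := by
  rw [← Matrix.mul_assoc, Matrix.mul_nonsing_inv _ h, Matrix.one_mul]

private lemma ZM_inv_mul_cancel_left {r k : ℕ} {M : Matrix (Fin r) (Fin r) ℂ} (h : IsUnit M.det)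
    (x : Matrix (Fin r) (Fin k) ℂ) : M⁻¹ * (M * x) = x := by
  rw [← Matrix.mul_assoc, Matrix.nonsing_inv_mul _ h, Matrix.one_mul]

/-- the Zakharov–Mikhailov ansatz `π₁ = Ymᵀ`, `π₋₁ = SXnᵀS⁻¹` with
`Y = (n + Sm(ρᵀ)⁻¹B)R⁻¹`, `X = (m + Snρ⁻¹A)(Rᵀ)⁻¹` solves the four algebraic
equations (E1)–(E4). -/
theorem ZM_ansatz_solves_algebraic_equations {N r₁ : ℕ} (σ : ℂ) (hσ : σ = 1 ∨ σ = -1)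
    (S : Matrix (Fin N) (Fin N) ℂ) (hSdet : IsUnit S.det)
    (hST : Sᵀ = σ • S) (hSinv : S⁻¹ = σ • S)
    (n m : Matrix (Fin N) (Fin r₁) ℂ)
    (hn : nᵀ * S * n = 0) (hm : mᵀ * S * m = 0)
    (A B : Matrix (Fin r₁) (Fin r₁) ℂ)
    (hA : Aᵀ = -σ • A) (hB : Bᵀ = -σ • B)
    (ρ R : Matrix (Fin r₁) (Fin r₁) ℂ)
    (hρdef : ρ = mᵀ * n) (hRdef : R = ρ - σ • (A * (ρᵀ)⁻¹ * B))
    (hρ : IsUnit ρ.det) (hR : IsUnit R.det)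
    (Y X : Matrix (Fin N) (Fin r₁) ℂ)
    (hY : Y = (n + S * m * (ρᵀ)⁻¹ * B) * R⁻¹)
    (hX : X = (m + S * n * ρ⁻¹ * A) * (Rᵀ)⁻¹)
    (π₁ πm : Matrix (Fin N) (Fin N) ℂ)
    (hπ₁ : π₁ = Y * mᵀ) (hπm : πm = S * (X * nᵀ) * S⁻¹) :
    π₁ * S * π₁ᵀ * S⁻¹ = 0 ∧
    πm * S * πmᵀ * S⁻¹ = 0 ∧
    π₁ + S * π₁ᵀ * S⁻¹ - π₁ * S * πmᵀ * S⁻¹ - πm * S * π₁ᵀ * S⁻¹ = 0 ∧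
    πm + S * πmᵀ * S⁻¹ - π₁ * S * πmᵀ * S⁻¹ - πm * S * π₁ᵀ * S⁻¹ = 0 := by
  have hσ2 : σ * σ = 1 := by rcases hσ with h | h <;> subst h <;> norm_num
  have hρT : IsUnit (ρᵀ).det := by rwa [Matrix.det_transpose]
  have hRT : IsUnit (Rᵀ).det := by rwa [Matrix.det_transpose]
  -- transpose-of-inverse facts
  have tτ : ((ρᵀ)⁻¹)ᵀ = ρ⁻¹ := by
    rw [← Matrix.transpose_nonsing_inv, Matrix.transpose_transpose]
  have tR : (R⁻¹)ᵀ = (Rᵀ)⁻¹ := Matrix.transpose_nonsing_inv R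
  have tT : (((Rᵀ)⁻¹))ᵀ = R⁻¹ := by
    rw [← Matrix.transpose_nonsing_inv, Matrix.transpose_transpose]
  -- S*S = σ•1 and its ∀-version
  have hSS : S * S = σ • 1 := by
    have h := Matrix.mul_nonsing_inv S hSdet
    rw [hSinv, Matrix.mul_smul] at h
    rw [← h, smul_smul, hσ2, one_smul]
  have cS : ∀ (k : ℕ) (x : Matrix (Fin N) (Fin k) ℂ), S * (S * x) = σ • x := by
    intro k x; rw [← Matrix.mul_assoc, hSS, Matrix.smul_mul, Matrix.one_mul]
  -- middle relations
  have cmn : ∀ (k : ℕ) (x : Matrix (Fin r₁) (Fin k) ℂ), mᵀ * (n * x) = ρ * x := by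
    intro k x; rw [← Matrix.mul_assoc, ← hρdef]
  have cnm : ∀ (k : ℕ) (x : Matrix (Fin r₁) (Fin k) ℂ), nᵀ * (m * x) = ρᵀ * x := by
    intro k x; rw [← Matrix.mul_assoc]
    congr 1
    rw [hρdef, Matrix.transpose_mul, Matrix.transpose_transpose]
  have zm : ∀ (k : ℕ) (x : Matrix (Fin r₁) (Fin k) ℂ), mᵀ * (S * (m * x)) = 0 := by
    intro k x
    rw [← Matrix.mul_assoc, ← Matrix.mul_assoc, hm, Matrix.zero_mul]
  have zn : ∀ (k : ℕ) (x : Matrix (Fin r₁) (Fin k) ℂ), nᵀ * (S * (n * x)) = 0 := by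
    intro k x
    rw [← Matrix.mul_assoc, ← Matrix.mul_assoc, hn, Matrix.zero_mul]
  -- hRT_eq
  have hRT_eq : Rᵀ = ρᵀ - σ • (B * (ρ⁻¹ * A)) := by
    rw [hRdef]
    simp only [Matrix.transpose_sub, Matrix.transpose_smul, Matrix.transpose_mul, tτ, hA, hB,
      Matrix.smul_mul, Matrix.mul_smul, smul_smul, Matrix.mul_assoc, neg_mul_neg, hσ2, one_smul]
  -- identity (i):  ρ⁻¹ A (Rᵀ)⁻¹ = R⁻¹ A (ρᵀ)⁻¹
  have e1 : R * (ρ⁻¹ * A) = A * ((ρᵀ)⁻¹ * Rᵀ) := by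
    conv_lhs => rw [hRdef]
    conv_rhs => rw [hRT_eq]
    simp only [Matrix.sub_mul, Matrix.mul_sub, Matrix.smul_mul, Matrix.mul_smul,
      Matrix.mul_assoc, ZM_mul_inv_cancel_left hρ,
      ← Matrix.mul_assoc ((ρᵀ)⁻¹) (ρᵀ), Matrix.nonsing_inv_mul _ hρT, Matrix.one_mul,
      Matrix.mul_one]
  have idQx : ∀ (k : ℕ) (x : Matrix (Fin r₁) (Fin k) ℂ),
      ρ⁻¹ * (A * ((Rᵀ)⁻¹ * x)) = R⁻¹ * (A * ((ρᵀ)⁻¹ * x)) := by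
    intro k x
    have h3 : R * (ρ⁻¹ * A) * ((Rᵀ)⁻¹ * x) = A * ((ρᵀ)⁻¹ * Rᵀ) * ((Rᵀ)⁻¹ * x) := by rw [e1]
    simp only [Matrix.mul_assoc, ZM_mul_inv_cancel_left hRT] at h3
    calc ρ⁻¹ * (A * ((Rᵀ)⁻¹ * x)) = R⁻¹ * (R * (ρ⁻¹ * (A * ((Rᵀ)⁻¹ * x)))) :=
          (ZM_inv_mul_cancel_left hR _).symm
    _ = R⁻¹ * (A * ((ρᵀ)⁻¹ * x)) := by rw [h3]
  -- identity (ii): (ρᵀ)⁻¹ B R⁻¹ = (Rᵀ)⁻¹ B ρ⁻¹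
  have e2 : Rᵀ * ((ρᵀ)⁻¹ * B) = B * (ρ⁻¹ * R) := by
    conv_lhs => rw [hRT_eq]
    conv_rhs => rw [hRdef]
    simp only [Matrix.sub_mul, Matrix.mul_sub, Matrix.smul_mul, Matrix.mul_smul,
      Matrix.mul_assoc, ZM_mul_inv_cancel_left hρT,
      ← Matrix.mul_assoc (ρ⁻¹) ρ, Matrix.nonsing_inv_mul _ hρ, Matrix.one_mul,
      Matrix.mul_one]
  have idPx : ∀ (k : ℕ) (x : Matrix (Fin r₁) (Fin k) ℂ),
      (ρᵀ)⁻¹ * (B * (R⁻¹ * x)) = (Rᵀ)⁻¹ * (B * (ρ⁻¹ * x)) := by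
    intro k x
    have h3 : Rᵀ * ((ρᵀ)⁻¹ * B) * (R⁻¹ * x) = B * (ρ⁻¹ * R) * (R⁻¹ * x) := by rw [e2]
    simp only [Matrix.mul_assoc, ZM_mul_inv_cancel_left hR] at h3
    calc (ρᵀ)⁻¹ * (B * (R⁻¹ * x)) = (Rᵀ)⁻¹ * (Rᵀ * ((ρᵀ)⁻¹ * (B * (R⁻¹ * x)))) :=
          (ZM_inv_mul_cancel_left hRT _).symm
    _ = (Rᵀ)⁻¹ * (B * (ρ⁻¹ * x)) := by rw [h3]
  -- rel5 : R⁻¹ ρ = 1 + σ Q B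
  have hρeq : ρ = R + σ • (A * ((ρᵀ)⁻¹ * B)) := by
    rw [hRdef, Matrix.mul_assoc]; abel
  have rel5 : ∀ (k : ℕ) (x : Matrix (Fin r₁) (Fin k) ℂ),
      R⁻¹ * (ρ * x) = x + σ • (R⁻¹ * (A * ((ρᵀ)⁻¹ * (B * x)))) := by
    intro k x
    conv_lhs => rw [hρeq]
    simp only [Matrix.add_mul, Matrix.smul_mul, Matrix.mul_add, Matrix.mul_smul,
      Matrix.mul_assoc, ZM_inv_mul_cancel_left hR]
  -- rel7 : ρᵀ (Rᵀ)⁻¹ = 1 + σ B Q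
  have hρTeq : ρᵀ = Rᵀ + σ • (B * (ρ⁻¹ * A)) := by
    rw [hRT_eq]; abel
  have rel7 : ∀ (k : ℕ) (x : Matrix (Fin r₁) (Fin k) ℂ),
      ρᵀ * ((Rᵀ)⁻¹ * x) = x + σ • (B * (R⁻¹ * (A * ((ρᵀ)⁻¹ * x)))) := by
    intro k x
    conv_lhs => rw [hρTeq]
    simp only [Matrix.add_mul, Matrix.smul_mul, Matrix.mul_add, Matrix.mul_smul,
      Matrix.mul_assoc, ZM_mul_inv_cancel_left hRT, idQx]
  -- the four building blocks
  set M1 : Matrix (Fin N) (Fin N) ℂ := n * (R⁻¹ * mᵀ) with hM1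
  set M2 : Matrix (Fin N) (Fin N) ℂ := S * (m * ((ρᵀ)⁻¹ * (B * (R⁻¹ * mᵀ)))) with hM2
  set M3 : Matrix (Fin N) (Fin N) ℂ := S * (m * ((Rᵀ)⁻¹ * (nᵀ * S))) with hM3
  set M4 : Matrix (Fin N) (Fin N) ℂ := n * (R⁻¹ * (A * ((ρᵀ)⁻¹ * (nᵀ * S)))) with hM4
  set W1 : Matrix (Fin N) (Fin N) ℂ := n * (R⁻¹ * (A * ((ρᵀ)⁻¹ * (B * (R⁻¹ * mᵀ))))) with hW1
  set W2 : Matrix (Fin N) (Fin N) ℂ :=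
    n * (R⁻¹ * (A * ((ρᵀ)⁻¹ * (B * (R⁻¹ * (A * ((ρᵀ)⁻¹ * (nᵀ * S)))))))) with hW2
  set W3 : Matrix (Fin N) (Fin N) ℂ := S * (m * ((Rᵀ)⁻¹ * (B * (R⁻¹ * mᵀ)))) with hW3
  set W4 : Matrix (Fin N) (Fin N) ℂ :=
    S * (m * ((Rᵀ)⁻¹ * (B * (R⁻¹ * (A * ((ρᵀ)⁻¹ * (nᵀ * S))))))) with hW4
  -- normalized forms of Y and X
  have hY2 : Y = n * R⁻¹ + S * (m * ((ρᵀ)⁻¹ * (B * R⁻¹))) := by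
    rw [hY]; simp only [Matrix.add_mul, Matrix.mul_assoc]
  have hX2 : X = m * (Rᵀ)⁻¹ + S * (n * (R⁻¹ * (A * (ρᵀ)⁻¹))) := by
    rw [hX]; simp only [Matrix.add_mul, Matrix.mul_assoc]
    have h4 := idQx r₁ 1
    rw [Matrix.mul_one, Matrix.mul_one] at h4
    rw [h4]
  -- block formula for π₁
  have hπ1_eq : π₁ = M1 + M2 := by
    rw [hπ₁, hY2, hM1, hM2]
    simp only [Matrix.add_mul, Matrix.mul_assoc]
  -- transposes of the blocks
  have tM1 : M1ᵀ = m * ((Rᵀ)⁻¹ * nᵀ) := by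
    rw [hM1]; simp only [Matrix.transpose_mul, Matrix.transpose_transpose, tR, Matrix.mul_assoc]
  have tM2 : M2ᵀ = -(m * ((ρᵀ)⁻¹ * (B * (R⁻¹ * (mᵀ * S))))) := by
    rw [hM2]
    simp only [Matrix.transpose_mul, Matrix.transpose_transpose, tR, tτ, hB, hST,
      Matrix.smul_mul, Matrix.mul_smul, Matrix.neg_mul, Matrix.mul_neg,
      Matrix.mul_assoc, smul_smul, mul_neg, neg_mul, smul_neg, hσ2,
      neg_smul, one_smul]
    rw [← idPx N (mᵀ * S)]
  have tM3 : M3ᵀ = S * (n * (R⁻¹ * (mᵀ * S))) := by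
    rw [hM3]
    simp only [Matrix.transpose_mul, Matrix.transpose_transpose, tT, hST,
      Matrix.smul_mul, Matrix.mul_smul, Matrix.mul_assoc, smul_smul, hσ2, one_smul]
  have tM4 : M4ᵀ = -(S * (n * (R⁻¹ * (A * ((ρᵀ)⁻¹ * nᵀ))))) := by
    rw [hM4]
    simp only [Matrix.transpose_mul, Matrix.transpose_transpose, tR, tτ, tT, hA, hST,
      Matrix.smul_mul, Matrix.mul_smul, Matrix.neg_mul, Matrix.mul_neg,
      Matrix.mul_assoc, smul_smul, mul_neg, neg_mul, smul_neg, hσ2,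
      neg_smul, one_smul, idQx]
  -- block formula for S π₁ᵀ S⁻¹
  have hπ1T : S * (π₁ᵀ * S⁻¹) = σ • M3 - M2 := by
    rw [hπ1_eq, hSinv, Matrix.transpose_add, tM1, tM2, hM3, hM2]
    simp only [Matrix.add_mul, Matrix.neg_mul, Matrix.smul_mul, Matrix.mul_smul,
      Matrix.mul_add, Matrix.mul_neg, Matrix.mul_assoc, hSS, cS, smul_smul, hσ2, one_smul,
      Matrix.mul_one, smul_add, smul_neg, sub_eq_add_neg]
  -- block formula for πm
  have hπm_eq : πm = σ • M3 + M4 := by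
    rw [hπm, hSinv, hX2, hM3, hM4]
    simp only [Matrix.add_mul, Matrix.smul_mul, Matrix.mul_smul, Matrix.mul_add,
      Matrix.mul_assoc, cS, smul_smul, hσ2, one_smul, smul_add]
  -- block formula for S πmᵀ S⁻¹
  have hπmT : S * (πmᵀ * S⁻¹) = M1 - M4 := by
    rw [hπm_eq, hSinv, Matrix.transpose_add, Matrix.transpose_smul, tM3, tM4, hM1, hM4]
    simp only [Matrix.add_mul, Matrix.neg_mul, Matrix.smul_mul, Matrix.mul_smul,
      Matrix.mul_add, Matrix.mul_neg, Matrix.mul_assoc, hSS, cS, smul_smul, hσ2, one_smul,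
      Matrix.mul_one, smul_add, smul_neg, sub_eq_add_neg]
  -- vanishing products
  have q12 : M1 * M2 = 0 := by
    rw [hM1, hM2]; simp only [Matrix.mul_assoc, zm, Matrix.mul_zero]
  have q13 : M1 * M3 = 0 := by
    rw [hM1, hM3]; simp only [Matrix.mul_assoc, zm, Matrix.mul_zero]
  have q22 : M2 * M2 = 0 := by
    rw [hM2]; simp only [Matrix.mul_assoc, zm, Matrix.mul_zero]
  have q23 : M2 * M3 = 0 := by
    rw [hM2, hM3]; simp only [Matrix.mul_assoc, zm, Matrix.mul_zero]
  have q31 : M3 * M1 = 0 := by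
    rw [hM3, hM1]; simp only [Matrix.mul_assoc, zn, Matrix.mul_zero]
  have q34 : M3 * M4 = 0 := by
    rw [hM3, hM4]; simp only [Matrix.mul_assoc, zn, Matrix.mul_zero]
  have q41 : M4 * M1 = 0 := by
    rw [hM4, hM1]; simp only [Matrix.mul_assoc, zn, Matrix.mul_zero]
  have q44 : M4 * M4 = 0 := by
    rw [hM4]; simp only [Matrix.mul_assoc, zn, Matrix.mul_zero]
  -- nonvanishing products
  have p11 : M1 * M1 = M1 + σ • W1 := by
    rw [hM1, hW1]
    simp only [Matrix.mul_assoc, cmn, rel5, Matrix.mul_add, Matrix.mul_smul]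
  have p14 : M1 * M4 = M4 + σ • W2 := by
    rw [hM1, hM4, hW2]
    simp only [Matrix.mul_assoc, cmn, rel5, Matrix.mul_add, Matrix.mul_smul]
  have p21 : M2 * M1 = W3 := by
    rw [hM2, hM1, hW3]
    simp only [Matrix.mul_assoc, cmn, idPx, ZM_inv_mul_cancel_left hρ]
  have p24 : M2 * M4 = W4 := by
    rw [hM2, hM4, hW4]
    simp only [Matrix.mul_assoc, cmn, idPx, ZM_inv_mul_cancel_left hρ]
  have p33 : M3 * M3 = σ • M3 + W4 := by
    rw [hM3, hW4]
    simp only [Matrix.mul_assoc, cS, Matrix.mul_smul, cnm, rel7, Matrix.mul_add, smul_add,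
      smul_smul, hσ2, one_smul, mul_one]
  have p32 : M3 * M2 = σ • W3 := by
    rw [hM3, hM2, hW3]
    simp only [Matrix.mul_assoc, cS, Matrix.mul_smul, cnm, ZM_mul_inv_cancel_left hρT,
      smul_smul, hσ2, one_smul, mul_one]
  have p43 : M4 * M3 = σ • M4 + W2 := by
    rw [hM4, hM3, hW2]
    simp only [Matrix.mul_assoc, cS, Matrix.mul_smul, cnm, rel7, Matrix.mul_add, smul_add,
      smul_smul, hσ2, one_smul, mul_one]
  have p42 : M4 * M2 = σ • W1 := by
    rw [hM4, hM2, hW1]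
    simp only [Matrix.mul_assoc, cS, Matrix.mul_smul, cnm, ZM_mul_inv_cancel_left hρT,
      smul_smul, hσ2, one_smul, mul_one]
  refine ⟨?_, ?_, ?_, ?_⟩
  · rw [Matrix.mul_assoc, Matrix.mul_assoc, hπ1T, hπ1_eq]
    simp only [Matrix.mul_sub, Matrix.mul_add, Matrix.add_mul, Matrix.mul_smul, q12, q13, q22,
      q23, smul_zero, sub_zero, add_zero, zero_sub, neg_zero, zero_add]
  · rw [Matrix.mul_assoc, Matrix.mul_assoc, hπmT, hπm_eq]
    simp only [Matrix.mul_sub, Matrix.mul_add, Matrix.add_mul, Matrix.smul_mul,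
      Matrix.mul_smul, q31, q34, q41, q44, smul_zero, sub_zero, add_zero, zero_sub, neg_zero,
      zero_add]
  · simp only [Matrix.mul_assoc]
    rw [hπ1T, hπmT, hπ1_eq, hπm_eq]
    simp only [Matrix.add_mul, Matrix.sub_mul, Matrix.mul_sub, Matrix.mul_add, Matrix.smul_mul,
      Matrix.mul_smul, p11, p14, p21, p24, p33, p32, p43, p42, smul_add, smul_sub, smul_smul,
      hσ2, one_smul, mul_one]
    module
  · simp only [Matrix.mul_assoc]
    rw [hπ1T, hπmT, hπ1_eq, hπm_eq]
    simp only [Matrix.add_mul, Matrix.sub_mul, Matrix.mul_sub, Matrix.mul_add, Matrix.smul_mul,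
      Matrix.mul_smul, p11, p14, p21, p24, p33, p32, p43, p42, smul_add, smul_sub, smul_smul,
      hσ2, one_smul, mul_one]
    module
end

section
/- Let S be an invertible N×N complex matrix and let π₁, π₋₁ be N×N complex matrices satisfying π₁ + π₋₁ = I together with the four algebraic equations: (E1) π₁Sπ₁ᵀS⁻¹ = 0; (E2) π₋₁Sπ₋₁ᵀS⁻¹ = 0; (E3) π₁ + Sπ₁ᵀS⁻¹ − π₁Sπ₋₁ᵀS⁻¹ − π₋₁Sπ₁ᵀS⁻¹ = 0; (E4) π₋₁ + Sπ₋₁ᵀS⁻¹ − π₁Sπ₋₁ᵀS⁻¹ − π₋₁Sπ₁ᵀS⁻¹ = 0. Then: (1) π₋₁ = Sπ₁ᵀS⁻¹; (2) π₁² = π₁, π₋₁² = π₋₁, and π₁π₋₁ = π₋₁π₁ = 0 (π₁ and π₋₁ are mutually orthogonal projectors). -/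
open Matrix

/-- Lemma on `π₁ + π₋₁ = 1`: if `π₁ + π₋₁ = 1` and the four algebraic
equations (E1)–(E4) hold, then `π₋₁ = Sπ₁ᵀS⁻¹` and `π₁`, `π₋₁` are mutually
orthogonal projectors. -/
theorem complementary_poles_are_orthogonal_projectors {N : ℕ}
    (S π₁ πm : Matrix (Fin N) (Fin N) ℂ) (hS : IsUnit S.det)
    (hsum : π₁ + πm = 1)
    (hE1 : π₁ * S * π₁ᵀ * S⁻¹ = 0)
    (hE2 : πm * S * πmᵀ * S⁻¹ = 0)
    (hE3 : π₁ + S * π₁ᵀ * S⁻¹ - π₁ * S * πmᵀ * S⁻¹ - πm * S * π₁ᵀ * S⁻¹ = 0)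
    (hE4 : πm + S * πmᵀ * S⁻¹ - π₁ * S * πmᵀ * S⁻¹ - πm * S * π₁ᵀ * S⁻¹ = 0) :
    πm = S * π₁ᵀ * S⁻¹ ∧
    π₁ * π₁ = π₁ ∧ πm * πm = πm ∧ π₁ * πm = 0 ∧ πm * π₁ = 0 := by
  have hinv : S * S⁻¹ = 1 := Matrix.mul_nonsing_inv S hS
  have hm : πm = 1 - π₁ := eq_sub_of_add_eq' hsum
  have hm' : π₁ = 1 - πm := eq_sub_of_add_eq hsum
  have hB : S * πmᵀ * S⁻¹ = 1 - S * π₁ᵀ * S⁻¹ := by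
    rw [hm, Matrix.transpose_sub, Matrix.transpose_one, mul_sub, mul_one, sub_mul, hinv]
  have h1 : π₁ * (S * π₁ᵀ * S⁻¹) = 0 := by
    rw [← Matrix.mul_assoc, ← Matrix.mul_assoc]; exact hE1
  have h2 : πm * (S * πmᵀ * S⁻¹) = 0 := by
    rw [← Matrix.mul_assoc, ← Matrix.mul_assoc]; exact hE2
  rw [hB, mul_sub, mul_one, sub_eq_zero] at h2
  -- h2 : πm = πm * (S * π₁ᵀ * S⁻¹)
  have hA : πm = S * π₁ᵀ * S⁻¹ := by
    rw [h2]
    nth_rewrite 1 [hm]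
    rw [sub_mul, one_mul, h1, sub_zero]
  have hpm : π₁ * πm = 0 := by rw [hA]; exact h1
  have hmm : πm * πm = πm := by
    have h3 := h2.symm
    rw [← hA] at h3
    exact h3
  have hmp : πm * π₁ = 0 := by
    rw [hm', mul_sub, mul_one, hmm, sub_self]
  have hpp : π₁ * π₁ = π₁ := by
    nth_rewrite 2 [hm']
    rw [mul_sub, mul_one, hpm, sub_zero]
  exact ⟨hA, hpp, hmm, hpm, hmp⟩
end

section
/- Let J ∈ M_N(ℂ) be a constant matrix, λ₁⁺, λ₁⁻ ∈ ℂ, and let q₀, q₁ : ℝ → M_N(ℂ) be functions. Suppose π₁, π₋₁ : ℝ → M_N(ℂ) are differentiable, satisfy π₁(x) + π₋₁(x) = I for all x, and solve the two differential equations i·π₁'(x) + q₁(x)π₁(x) − π₁(x)q₀(x) − λ₁⁻[J, π₁(x)] = 0 and i·π₋₁'(x) + q₁(x)π₋₁(x) − π₋₁(x)q₀(x) − λ₁⁺[J, π₋₁(x)] = 0. Then q₁(x) = q₀(x) + (λ₁⁻ − λ₁⁺)[J, π₁(x)] for all x. Moreover, if μ ∈ ℂ is such that q₁(x) = q₀(x)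 + 2μ(λ₁⁻ − λ₁⁺)[J, π₁(x)] for all x, and λ₁⁻ ≠ λ₁⁺ and [J, π₁(x₀)] ≠ 0 for some x₀, then μ = 1/2. -/
open Matrix

attribute [local instance] Matrix.normedAddCommGroup Matrix.normedSpace

/-- if `π₁ + π₋₁ = 1` and `π₁, π₋₁` satisfy the two dressing
differential equations, then `q₁ = q₀ + (λ₁⁻ − λ₁⁺)[J, π₁]`; moreover if also
`q₁ = q₀ + 2μ(λ₁⁻ − λ₁⁺)[J, π₁]` with `λ₁⁻ ≠ λ₁⁺` and `[J, π₁(x₀)] ≠ 0` for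
some `x₀`, then `μ = 1/2`.  (`lp` stands for `λ₁⁺`, `lm` for `λ₁⁻`.) -/
theorem dressed_potential_and_mu_half {N : ℕ}
    (J : Matrix (Fin N) (Fin N) ℂ) (lp lm : ℂ)
    (q₀ q₁ π₁ πm : ℝ → Matrix (Fin N) (Fin N) ℂ)
    (hπ₁ : Differentiable ℝ π₁) (hπm : Differentiable ℝ πm)
    (hsum : ∀ x, π₁ x + πm x = 1)
    (heq1 : ∀ x, Complex.I • deriv π₁ x + q₁ x * π₁ x - π₁ x * q₀ x
      - lm • (J * π₁ x - π₁ x * J) = 0)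
    (heq2 : ∀ x, Complex.I • deriv πm x + q₁ x * πm x - πm x * q₀ x
      - lp • (J * πm x - πm x * J) = 0) :
    (∀ x, q₁ x = q₀ x + (lm - lp) • (J * π₁ x - π₁ x * J)) ∧
    (∀ μ : ℂ,
      (∀ x, q₁ x = q₀ x + (2 * μ * (lm - lp)) • (J * π₁ x - π₁ x * J)) →
      lm ≠ lp → (∃ x₀, J * π₁ x₀ - π₁ x₀ * J ≠ 0) → μ = 1 / 2) := by
  have hmain : ∀ x, q₁ x = q₀ x + (lm - lp) • (J * π₁ x - π₁ x * J) := by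
    intro x
    have hderiv : deriv π₁ x + deriv πm x = 0 := by
      have h1 : (fun x => π₁ x + πm x) = fun _ => (1 : Matrix (Fin N) (Fin N) ℂ) :=
        funext hsum
      have h2 : deriv (fun x => π₁ x + πm x) x = deriv π₁ x + deriv πm x :=
        deriv_add (hπ₁ x) (hπm x)
      rw [h1] at h2
      have h3 : deriv (fun _ : ℝ => (1 : Matrix (Fin N) (Fin N) ℂ)) x = 0 := deriv_const x _
      rw [h3] at h2
      exact h2.symm
    have hm : πm x = 1 - π₁ x := by
      have := hsum x; linear_combination (norm := module) this
    have h1 := heq1 x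
    have h2 := heq2 x
    rw [hm] at h2
    have hcomb := congrArg₂ (· + ·) h1 h2
    simp only [add_zero] at hcomb
    have : q₁ x - q₀ x - (lm - lp) • (J * π₁ x - π₁ x * J) = 0 := by
      have hd : deriv πm x = - deriv π₁ x := by
        linear_combination (norm := module) hderiv
      rw [hd] at hcomb
      simp only [mul_sub, sub_mul, mul_one, one_mul, smul_neg, smul_sub] at hcomb
      linear_combination (norm := module) hcomb
    linear_combination (norm := module) this
  refine ⟨hmain, fun μ hμ hne ⟨x₀, hx₀⟩ => ?_⟩
  have h1 := hmain x₀
  have h2 := hμ x₀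
  have h3 : ((lm - lp) - 2 * μ * (lm - lp)) • (J * π₁ x₀ - π₁ x₀ * J) = 0 := by
    rw [sub_smul]
    rw [h2] at h1
    linear_combination (norm := module) -h1
  rcases smul_eq_zero.mp h3 with hc | hc
  · have hlm : lm - lp ≠ 0 := sub_ne_zero.mpr hne
    have : (1 - 2 * μ) * (lm - lp) = 0 := by linear_combination hc
    rcases mul_eq_zero.mp this with h | h
    · linear_combination -h / 2
    · exact absurd h hlm
  · exact absurd hc hx₀
end

section
/- Let S be an N×N complex matrix with Sᵀ = S and S² = I, and let π₁ ∈ M_N(ℂ) satisfy π₁² = π₁. Set π₋₁ = Sπ₁ᵀS⁻¹ and assume π₁π₋₁ = π₋₁π₁ = 0. Then for every nonzero c ∈ ℂ, the matrix u(c) = I + (c−1)π₁ + (c⁻¹−1)π₋₁ satisfies u(c)·S·u(c)ᵀ = S, i.e. u(c) belongs to the orthogonal group defined by S. -/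
open Matrix

lemma dressing_aux {N : ℕ} (S p q : Matrix (Fin N) (Fin N) ℂ)
    (hp : p * p = p) (hq : q * q = q) (hpq : p * q = 0) (hqp : q * p = 0)
    (hpS : p * S = S * qᵀ) (hqS : q * S = S * pᵀ)
    (a b : ℂ) (hab : a + b + a * b = 0) :
    ((1 : Matrix (Fin N) (Fin N) ℂ) + a • p + b • q) * S *
      ((1 : Matrix (Fin N) (Fin N) ℂ) + a • p + b • q)ᵀ = S := by
  have key : ((1 : Matrix (Fin N) (Fin N) ℂ) + a • p + b • q) *
      ((1 : Matrix (Fin N) (Fin N) ℂ) + a • q + b • p) = 1 := by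
    simp only [mul_add, add_mul, one_mul, mul_one, Matrix.smul_mul, Matrix.mul_smul,
      hp, hq, hpq, hqp, smul_zero, smul_smul]
    have h3 : a * b = -(a + b) := by linear_combination hab
    rw [mul_comm b a, h3]
    module
  have hT : ((1 : Matrix (Fin N) (Fin N) ℂ) + a • p + b • q)ᵀ =
      1 + a • pᵀ + b • qᵀ := by
    simp [transpose_add, transpose_smul]
  rw [hT]
  have hS : S * ((1 : Matrix (Fin N) (Fin N) ℂ) + a • pᵀ + b • qᵀ) =
      ((1 : Matrix (Fin N) (Fin N) ℂ) + a • q + b • p) * S := by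
    simp only [mul_add, add_mul, mul_one, one_mul, Matrix.mul_smul, Matrix.smul_mul,
      ← hpS, ← hqS]
  rw [mul_assoc, hS, ← mul_assoc, key, one_mul]

/-- if `Sᵀ = S`, `S² = 1`, `π₁` is a projector, `π₋₁ = Sπ₁ᵀS⁻¹` and
`π₁π₋₁ = π₋₁π₁ = 0`, then `u(c) = 1 + (c−1)•π₁ + (c⁻¹−1)•π₋₁` lies in the
orthogonal group defined by `S`: `u(c) S u(c)ᵀ = S` for all `c ≠ 0`. -/
theorem dressing_factor_in_orthogonal_group {N : ℕ}
    (S π₁ : Matrix (Fin N) (Fin N) ℂ)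
    (hST : Sᵀ = S) (hS2 : S * S = 1)
    (hproj : π₁ * π₁ = π₁)
    (πm : Matrix (Fin N) (Fin N) ℂ) (hπm : πm = S * π₁ᵀ * S⁻¹)
    (h1 : π₁ * πm = 0) (h2 : πm * π₁ = 0) :
    ∀ c : ℂ, c ≠ 0 →
      ((1 : Matrix (Fin N) (Fin N) ℂ) + (c - 1) • π₁ + (c⁻¹ - 1) • πm) * S *
        ((1 : Matrix (Fin N) (Fin N) ℂ) + (c - 1) • π₁ + (c⁻¹ - 1) • πm)ᵀ = S := by
  intro c hc
  have hSinv : S⁻¹ = S := inv_eq_right_inv hS2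
  have hπm' : πm = S * π₁ᵀ * S := by rw [hπm, hSinv]
  have hqq : πm * πm = πm := by
    rw [hπm']
    calc S * π₁ᵀ * S * (S * π₁ᵀ * S) = S * π₁ᵀ * (S * S) * π₁ᵀ * S := by
          simp only [mul_assoc]
      _ = S * (π₁ * π₁)ᵀ * S := by rw [hS2]; simp [mul_assoc, transpose_mul]
      _ = S * π₁ᵀ * S := by rw [hproj]
  have hπmT : πmᵀ = S * (π₁ * S) := by
    rw [hπm', transpose_mul, transpose_mul, transpose_transpose, hST]
  have hpS : π₁ * S = S * πmᵀ := by
    rw [hπmT, ← mul_assoc, hS2, one_mul]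
  have hqS : πm * S = S * π₁ᵀ := by
    rw [hπm', mul_assoc, hS2, mul_one]
  have hab : (c - 1) + (c⁻¹ - 1) + (c - 1) * (c⁻¹ - 1) = 0 := by
    field_simp
    ring
  exact dressing_aux S π₁ πm hproj hqq h1 h2 hpS hqS _ _ hab
end

section
/- Let q₀ : ℝ → M_N(ℂ) be continuous, J ∈ M_N(ℂ) constant, and λ₁⁺, λ₁⁻ ∈ ℂ. Let χ⁺, χ⁻ : ℝ → GL_N(ℂ) be differentiable and satisfy i·(χ±)'(x) + q₀(x)χ±(x) − λ₁± J χ±(x) = 0 for all x. Let n₀, m₀ be constant N×r complex matrices and suppose the r×r matrix R(x) := m₀ᵀ χ⁻(x)⁻¹ χ⁺(x) n₀ is invertible for all x. Define π₁(x) = χ⁺(x) n₀ R(x)⁻¹ m₀ᵀ χ⁻(x)⁻¹. Then π₁(x)² = π₁(x) for all x, and π₁ satisfies the Riccati-type differential equation i·π₁'(x) + [q₀(x), π₁(x)] + λ₁⁻ π₁(x)J − λ₁⁺ J π₁(x) − (λ₁⁻ − λ₁⁺) π₁(x) J π₁(x) = 0 for all x. -/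
open Matrix

attribute [local instance] Matrix.normedAddCommGroup Matrix.normedSpace

section Helpers

variable {x : ℝ}

lemma hasDerivAt_matrix {m n : ℕ} {f : ℝ → Matrix (Fin m) (Fin n) ℂ}
    {f' : Matrix (Fin m) (Fin n) ℂ} {x : ℝ} :
    HasDerivAt f f' x ↔ ∀ i j, HasDerivAt (fun y => f y i j) (f' i j) x := by
  constructor
  · intro h i j
    exact hasDerivAt_pi.mp (hasDerivAt_pi.mp h i) j
  · intro h
    exact hasDerivAt_pi.mpr fun i => hasDerivAt_pi.mpr fun j => h i j

lemma HasDerivAt.matmul {m n p : ℕ} {f : ℝ → Matrix (Fin m) (Fin n) ℂ}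
    {g : ℝ → Matrix (Fin n) (Fin p) ℂ} {f' g'}
    (hf : HasDerivAt f f' x) (hg : HasDerivAt g g' x) :
    HasDerivAt (fun y => f y * g y) (f' * g x + f x * g') x := by
  rw [hasDerivAt_matrix] at hf hg ⊢
  intro i j
  have h := HasDerivAt.fun_sum (u := Finset.univ)
    (A := fun k y => f y i k * g y k j)
    (A' := fun k => f' i k * g x k j + f x i k * g' k j)
    (fun k _ => (hf i k).mul (hg k j))
  simp only [Matrix.mul_apply, Matrix.add_apply]
  rw [← Finset.sum_add_distrib]
  exact h

lemma HasDerivAt.constMatmul {m n p : ℕ} (C : Matrix (Fin m) (Fin n) ℂ)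
    {g : ℝ → Matrix (Fin n) (Fin p) ℂ} {g'}
    (hg : HasDerivAt g g' x) :
    HasDerivAt (fun y => C * g y) (C * g') x := by
  simpa using (hasDerivAt_const x C).matmul hg

lemma HasDerivAt.matmulConst {m n p : ℕ} {f : ℝ → Matrix (Fin m) (Fin n) ℂ}
    (C : Matrix (Fin n) (Fin p) ℂ) {f'}
    (hf : HasDerivAt f f' x) :
    HasDerivAt (fun y => f y * C) (f' * C) x := by
  simpa using hf.matmul (hasDerivAt_const x C)

lemma differentiableAt_det_of_entries {n : ℕ} {f : ℝ → Matrix (Fin n) (Fin n) ℂ}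
    (hf : ∀ i j, DifferentiableAt ℝ (fun y => f y i j) x) :
    DifferentiableAt ℝ (fun y => (f y).det) x := by
  simp only [Matrix.det_apply]
  apply DifferentiableAt.fun_sum
  intro σ _
  simp only [Units.smul_def, zsmul_eq_mul]
  apply DifferentiableAt.const_mul
  apply DifferentiableAt.fun_finsetProd
  intro i _
  exact hf (σ i) i

lemma differentiableAt_inv_of_entries {n : ℕ} {f : ℝ → Matrix (Fin n) (Fin n) ℂ}
    (hf : ∀ i j, DifferentiableAt ℝ (fun y => f y i j) x)
    (hdet : (f x).det ≠ 0) :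
    ∀ i j, DifferentiableAt ℝ (fun y => (f y)⁻¹ i j) x := by
  intro i j
  have : (fun y => (f y)⁻¹ i j)
      = fun y => ((f y).det)⁻¹ * ((f y).updateRow j (Pi.single i 1)).det := by
    funext y
    rw [Matrix.inv_def, Matrix.smul_apply, Matrix.adjugate_apply, Ring.inverse_eq_inv',
      smul_eq_mul]
  rw [this]
  apply DifferentiableAt.mul
  · exact (differentiableAt_det_of_entries hf).inv hdet
  · apply differentiableAt_det_of_entries
    intro a b
    rcases eq_or_ne a j with h | h
    · simp [Matrix.updateRow_apply, h]
    · simpa [Matrix.updateRow_apply, h] using hf a b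

lemma differentiableAt_matrix_of_entries {m n : ℕ} {f : ℝ → Matrix (Fin m) (Fin n) ℂ}
    (h : ∀ i j, DifferentiableAt ℝ (fun y => f y i j) x) :
    DifferentiableAt ℝ f x :=
  (hasDerivAt_matrix.mpr fun i j => (h i j).hasDerivAt).differentiableAt

lemma entries_differentiableAt {m n : ℕ} {f : ℝ → Matrix (Fin m) (Fin n) ℂ}
    (h : DifferentiableAt ℝ f x) :
    ∀ i j, DifferentiableAt ℝ (fun y => f y i j) x := by
  intro i j
  exact (hasDerivAt_matrix.mp h.hasDerivAt i j).differentiableAt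

end Helpers



/-- the rank-`r` dressing matrix
`π₁ = χ⁺ n₀ R⁻¹ m₀ᵀ (χ⁻)⁻¹` is a projector and satisfies the Riccati-type
differential equation.  (`lp` = `λ₁⁺`, `lm` = `λ₁⁻`.) -/
theorem rank_r_projector_riccati {N r : ℕ}
    (q₀ : ℝ → Matrix (Fin N) (Fin N) ℂ) (hq₀ : Continuous q₀)
    (J : Matrix (Fin N) (Fin N) ℂ) (lp lm : ℂ)
    (χp χm : ℝ → Matrix (Fin N) (Fin N) ℂ)
    (hχp : Differentiable ℝ χp) (hχm : Differentiable ℝ χm)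
    (hχpu : ∀ x, IsUnit (χp x).det) (hχmu : ∀ x, IsUnit (χm x).det)
    (hZSp : ∀ x, Complex.I • deriv χp x + q₀ x * χp x - lp • (J * χp x) = 0)
    (hZSm : ∀ x, Complex.I • deriv χm x + q₀ x * χm x - lm • (J * χm x) = 0)
    (n₀ m₀ : Matrix (Fin N) (Fin r) ℂ)
    (R : ℝ → Matrix (Fin r) (Fin r) ℂ)
    (hRdef : ∀ x, R x = m₀ᵀ * (χm x)⁻¹ * χp x * n₀)
    (hR : ∀ x, IsUnit (R x).det)
    (π₁ : ℝ → Matrix (Fin N) (Fin N) ℂ)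
    (hπ₁ : ∀ x, π₁ x = χp x * n₀ * (R x)⁻¹ * m₀ᵀ * (χm x)⁻¹) :
    ∀ x, π₁ x * π₁ x = π₁ x ∧
      Complex.I • deriv π₁ x + (q₀ x * π₁ x - π₁ x * q₀ x)
        + lm • (π₁ x * J) - lp • (J * π₁ x)
        - (lm - lp) • (π₁ x * J * π₁ x) = 0 := by
  
  intro x
  have hBBi : χm x * (χm x)⁻¹ = 1 := Matrix.mul_nonsing_inv _ (hχmu x)
  have hBiB : (χm x)⁻¹ * χm x = 1 := Matrix.nonsing_inv_mul _ (hχmu x)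
  have hRiR : (R x)⁻¹ * R x = 1 := Matrix.nonsing_inv_mul _ (hR x)
  -- key cancellation
  have key : ∀ Z : Matrix (Fin r) (Fin N) ℂ,
      m₀ᵀ * ((χm x)⁻¹ * (χp x * (n₀ * Z))) = R x * Z := by
    intro Z
    rw [hRdef x]
    simp only [Matrix.mul_assoc]
  constructor
  · rw [hπ₁ x]
    simp only [Matrix.mul_assoc]
    rw [key, ← Matrix.mul_assoc ((R x)⁻¹) (R x), hRiR, Matrix.one_mul]
  · -- derivatives
    have hA : HasDerivAt χp (deriv χp x) x := (hχp x).hasDerivAt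
    have hB : HasDerivAt χm (deriv χm x) x := (hχm x).hasDerivAt
    set A' := deriv χp x with hA'def
    set B' := deriv χm x with hB'def
    -- inverse of χm
    have hBidiff : DifferentiableAt ℝ (fun y => (χm y)⁻¹) x :=
      differentiableAt_matrix_of_entries
        (differentiableAt_inv_of_entries (entries_differentiableAt (hχm x))
          (hχmu x).ne_zero)
    set Bi' := deriv (fun y => (χm y)⁻¹) x with hBi'def
    have hBi : HasDerivAt (fun y => (χm y)⁻¹) Bi' x := hBidiff.hasDerivAt
    have hBid : Bi' = -((χm x)⁻¹ * B' * (χm x)⁻¹) := by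
      have h1 : HasDerivAt (fun y => χm y * (χm y)⁻¹)
          (B' * (χm x)⁻¹ + χm x * Bi') x := hB.matmul hBi
      have h2 : (fun y => χm y * (χm y)⁻¹) = fun _ => (1 : Matrix (Fin N) (Fin N) ℂ) :=
        funext fun y => Matrix.mul_nonsing_inv _ (hχmu y)
      rw [h2] at h1
      have h3 := h1.unique (hasDerivAt_const x 1)
      have h4 : χm x * Bi' = -(B' * (χm x)⁻¹) := by
        have := eq_neg_of_add_eq_zero_right h3
        exact this
      calc Bi' = ((χm x)⁻¹ * χm x) * Bi' := by rw [hBiB, Matrix.one_mul]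
        _ = (χm x)⁻¹ * (χm x * Bi') := by rw [Matrix.mul_assoc]
        _ = (χm x)⁻¹ * (-(B' * (χm x)⁻¹)) := by rw [h4]
        _ = -((χm x)⁻¹ * B' * (χm x)⁻¹) := by rw [Matrix.mul_neg, Matrix.mul_assoc]
    -- derivative of R
    have hRfun : R = fun y => m₀ᵀ * (χm y)⁻¹ * χp y * n₀ := funext hRdef
    have hRd : HasDerivAt R
        ((m₀ᵀ * Bi' * χp x + m₀ᵀ * (χm x)⁻¹ * A') * n₀) x := by
      rw [hRfun]
      exact ((HasDerivAt.constMatmul m₀ᵀ hBi).matmul hA).matmulConst n₀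
    -- inverse of R
    have hRidiff : DifferentiableAt ℝ (fun y => (R y)⁻¹) x :=
      differentiableAt_matrix_of_entries
        (differentiableAt_inv_of_entries (entries_differentiableAt hRd.differentiableAt)
          (hR x).ne_zero)
    set Ri' := deriv (fun y => (R y)⁻¹) x with hRi'def
    have hRi : HasDerivAt (fun y => (R y)⁻¹) Ri' x := hRidiff.hasDerivAt
    have hRid : Ri' = -((R x)⁻¹ * ((m₀ᵀ * Bi' * χp x + m₀ᵀ * (χm x)⁻¹ * A') * n₀) * (R x)⁻¹) := by
      have h1 : HasDerivAt (fun y => R y * (R y)⁻¹)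
          (((m₀ᵀ * Bi' * χp x + m₀ᵀ * (χm x)⁻¹ * A') * n₀) * (R x)⁻¹ + R x * Ri') x :=
        hRd.matmul hRi
      have h2 : (fun y => R y * (R y)⁻¹) = fun _ => (1 : Matrix (Fin r) (Fin r) ℂ) :=
        funext fun y => Matrix.mul_nonsing_inv _ (hR y)
      rw [h2] at h1
      have h3 := h1.unique (hasDerivAt_const x 1)
      have h4 : R x * Ri' = -(((m₀ᵀ * Bi' * χp x + m₀ᵀ * (χm x)⁻¹ * A') * n₀) * (R x)⁻¹) :=
        eq_neg_of_add_eq_zero_right h3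
      calc Ri' = ((R x)⁻¹ * R x) * Ri' := by rw [hRiR, Matrix.one_mul]
        _ = (R x)⁻¹ * (R x * Ri') := by rw [Matrix.mul_assoc]
        _ = (R x)⁻¹ * (-(((m₀ᵀ * Bi' * χp x + m₀ᵀ * (χm x)⁻¹ * A') * n₀) * (R x)⁻¹)) := by
            rw [h4]
        _ = -((R x)⁻¹ * ((m₀ᵀ * Bi' * χp x + m₀ᵀ * (χm x)⁻¹ * A') * n₀) * (R x)⁻¹) := by
            rw [Matrix.mul_neg]; simp only [Matrix.mul_assoc]
    -- derivative of π₁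
    have hπfun : π₁ = fun y => χp y * n₀ * (R y)⁻¹ * m₀ᵀ * (χm y)⁻¹ := funext hπ₁
    have hπd : HasDerivAt π₁
        (((A' * n₀ * (R x)⁻¹ + χp x * n₀ * Ri') * m₀ᵀ) * (χm x)⁻¹
          + (χp x * n₀ * (R x)⁻¹ * m₀ᵀ) * Bi') x := by
      rw [hπfun]
      have := (((hA.matmulConst n₀).matmul hRi).matmulConst m₀ᵀ).matmul hBi
      convert this using 2
    -- ZS relations
    have hIA : Complex.I • A' = lp • (J * χp x) - q₀ x * χp x := by
      have h := hZSp x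
      rw [sub_eq_zero] at h
      exact eq_sub_of_add_eq h
    have hIB : Complex.I • B' = lm • (J * χm x) - q₀ x * χm x := by
      have h := hZSm x
      rw [sub_eq_zero] at h
      exact eq_sub_of_add_eq h
    -- I-scaled formulas
    have hIBi : Complex.I • Bi' = (χm x)⁻¹ * q₀ x - lm • ((χm x)⁻¹ * J) := by
      have h1 : Complex.I • Bi' = -((χm x)⁻¹ * (Complex.I • B') * (χm x)⁻¹) := by
        rw [hBid]
        simp only [smul_neg, Matrix.mul_smul, Matrix.smul_mul]
      rw [h1, hIB]
      simp only [Matrix.mul_sub, Matrix.sub_mul, Matrix.mul_smul, Matrix.smul_mul,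
        Matrix.mul_assoc, hBBi, Matrix.mul_one, neg_sub]
    have hIRi : Complex.I • Ri' =
        (lm - lp) • ((R x)⁻¹ * (m₀ᵀ * ((χm x)⁻¹ * (J * (χp x * (n₀ * (R x)⁻¹)))))) := by
      have h1 : Complex.I • Ri' =
          -((R x)⁻¹ * ((m₀ᵀ * (Complex.I • Bi') * χp x + m₀ᵀ * (χm x)⁻¹ * (Complex.I • A')) * n₀)
            * (R x)⁻¹) := by
        rw [hRid]
        simp only [smul_add, smul_neg, smul_sub, Matrix.smul_mul, Matrix.mul_smul, Matrix.add_mul, Matrix.mul_add, Matrix.sub_mul, Matrix.mul_sub, Matrix.neg_mul, Matrix.mul_neg, neg_add, neg_sub, neg_neg, Matrix.mul_assoc, Matrix.mul_one, Matrix.one_mul]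
      rw [h1, hIBi, hIA]
      simp only [smul_smul, sub_smul, smul_add, smul_neg, smul_sub, Matrix.smul_mul, Matrix.mul_smul, Matrix.add_mul, Matrix.mul_add, Matrix.sub_mul, Matrix.mul_sub, Matrix.neg_mul, Matrix.mul_neg, neg_add, neg_sub, neg_neg, Matrix.mul_assoc, Matrix.mul_one, Matrix.one_mul]
      module
    -- assemble
    erw [hπd.deriv]
    have keyI : Complex.I • (((A' * n₀ * (R x)⁻¹ + χp x * n₀ * Ri') * m₀ᵀ) * (χm x)⁻¹
          + (χp x * n₀ * (R x)⁻¹ * m₀ᵀ) * Bi')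
        = ((((Complex.I • A') * n₀ * (R x)⁻¹ + χp x * n₀ * (Complex.I • Ri')) * m₀ᵀ) * (χm x)⁻¹
          + (χp x * n₀ * (R x)⁻¹ * m₀ᵀ) * (Complex.I • Bi')) := by
      simp only [smul_add, smul_neg, smul_sub, Matrix.smul_mul, Matrix.mul_smul, Matrix.add_mul, Matrix.mul_add, Matrix.sub_mul, Matrix.mul_sub, Matrix.neg_mul, Matrix.mul_neg, neg_add, neg_sub, neg_neg, Matrix.mul_assoc, Matrix.mul_one, Matrix.one_mul]
    rw [keyI, hIA, hIBi, hIRi, hπ₁ x]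
    simp only [smul_smul, sub_smul, smul_add, smul_neg, smul_sub, Matrix.smul_mul, Matrix.mul_smul, Matrix.add_mul, Matrix.mul_add, Matrix.sub_mul, Matrix.mul_sub, Matrix.neg_mul, Matrix.mul_neg, neg_add, neg_sub, neg_neg, Matrix.mul_assoc, Matrix.mul_one, Matrix.one_mul]
    module
end
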